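/- Let G be a graph with vertex partition V_ℓ ∪ V_f and weights w_ℓ, w_f : V → ℝ≥0. In the bilevel independent set problem with sum-type leader objective, bottleneck-type follower objective and pessimistic follower, the leader's optimal value equals max( M_ℓ, m_∅ ), where M_ℓ is the maximum of Σ_{v∈L} w_ℓ(v) over all nonempty independent sets L ⊆ V_ℓ, and m_∅ = min{ w_ℓ(v) : v ∈ argmax_{u∈V_f} w_f(u) } is the leader's value when she plays the empty set (M_ℓ = −∞ if V_ℓ is empty, m_∅ = −∞ if V_f is empty, assuming V_ℓ ∪ V_f nonempty). -/

import Mathlib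

/-- A set of vertices is independent in `G`. -/
def IndepSet {V : Type*} (G : SimpleGraph V) (S : Set V) : Prop :=
  S.Pairwise fun u v => ¬ G.Adj u v

/-- A feasible follower reaction `F` to the leader's action `L`: it uses follower
vertices only, `L ∪ F` is independent and nonempty. -/
def FReaction {V : Type*} [DecidableEq V] (G : SimpleGraph V) (Vf : Set V)
    (L F : Finset V) : Prop :=
  ↑F ⊆ Vf ∧ IndepSet G ↑(L ∪ F) ∧ (L ∪ F).Nonempty

/-- A follower-optimal reaction for the bottleneck follower objective `w_f`. -/
def FOptReaction {V : Type*} [DecidableEq V] (G : SimpleGraph V) (Vf : Set V)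
    (wf : V → ℝ) (L F : Finset V) : Prop :=
  FReaction G Vf L F ∧ ∀ F' : Finset V, FReaction G Vf L F' →
    sInf (wf '' ↑(L ∪ F')) ≤ sInf (wf '' ↑(L ∪ F))

section Aux
set_option linter.unusedSectionVars false
variable {V : Type*} [Fintype V] [DecidableEq V]

lemma aux_csInf_le (f : V → ℝ) (s : Finset V) {u : V} (hu : u ∈ s) :
    sInf (f '' ↑s) ≤ f u :=
  csInf_le (Set.Finite.bddBelow (s.finite_toSet.image f)) ⟨u, hu, rfl⟩

lemma aux_csInf_mono (f : V → ℝ) {s t : Finset V} (hst : s ⊆ t) (hs : s.Nonempty) :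
    sInf (f '' ↑t) ≤ sInf (f '' ↑s) :=
  csInf_le_csInf (Set.Finite.bddBelow (t.finite_toSet.image f))
    ((Finset.coe_nonempty.mpr hs).image f)
    (Set.image_mono (f := f) (Finset.coe_subset.mpr hst))

lemma lemma_one (G : SimpleGraph V) (Vf : Set V) (wl wf : V → ℝ) (hwl : ∀ v, 0 ≤ wl v)
    (L : Finset V) (hind : IndepSet G ↑L) (hLne : L.Nonempty) :
    IsLeast {y : ℝ | ∃ F : Finset V, FOptReaction G Vf wf L F ∧
      y = ∑ v ∈ L ∪ F, wl v} (∑ v ∈ L, wl v) := by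
  constructor
  · refine ⟨∅, ⟨⟨by simp, by simpa using hind, by simpa using hLne⟩, ?_⟩, by simp⟩
    intro F' hF'
    rw [Finset.union_empty]
    exact aux_csInf_mono wf Finset.subset_union_left hLne
  · rintro y ⟨F, _, rfl⟩
    exact Finset.sum_le_sum_of_subset_of_nonneg Finset.subset_union_left
      (fun v _ _ => hwl v)

lemma lemma_two (G : SimpleGraph V) (Vf : Set V) (wl wf : V → ℝ) (hwl : ∀ v, 0 ≤ wl v)
    {v0 : V} (hv0 : v0 ∈ Vf) (hmax : ∀ u ∈ Vf, wf u ≤ wf v0)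
    (hmin : ∀ u ∈ Vf, (∀ u' ∈ Vf, wf u' ≤ wf u) → wl v0 ≤ wl u) :
    IsLeast {y : ℝ | ∃ F : Finset V, FOptReaction G Vf wf (∅ : Finset V) F ∧
      y = ∑ v ∈ (∅ : Finset V) ∪ F, wl v} (wl v0) := by
  have hsing : ∀ F' : Finset V, ((∅ : Finset V) ∪ F') = F' := fun F' => by simp
  constructor
  · refine ⟨{v0}, ⟨⟨by simpa using hv0, ?_, by simp⟩, ?_⟩, by simp⟩
    · rw [hsing]
      simp [IndepSet]
    · intro F' hF'
      rw [hsing, hsing]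
      have hFne : F'.Nonempty := by simpa using hF'.2.2
      obtain ⟨u, hu⟩ := hFne
      have : sInf (wf '' ↑({v0} : Finset V)) = wf v0 := by simp
      rw [this]
      exact le_trans (aux_csInf_le wf F' hu) (hmax u (hF'.1 (by simpa using hu)))
  · rintro y ⟨F, ⟨hfeas, hopt⟩, rfl⟩
    rw [hsing] at *
    have hFne : F.Nonempty := by simpa using hfeas.2.2
    obtain ⟨u, hu⟩ := hFne
    have hreact : FReaction G Vf (∅ : Finset V) {v0} := by
      refine ⟨by simpa using hv0, ?_, by simp⟩
      rw [hsing]; simp [IndepSet]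
    have h1 := hopt {v0} hreact
    have h2 : wf v0 ≤ wf u := by
      have heq : sInf (wf '' ↑((∅ : Finset V) ∪ {v0})) = wf v0 := by
        rw [hsing]; simp
      rw [heq] at h1
      exact le_trans h1 (aux_csInf_le wf F hu)
    have humax : ∀ u' ∈ Vf, wf u' ≤ wf u := fun u' hu' => le_trans (hmax u' hu') h2
    have h3 : wl v0 ≤ wl u := hmin u (hfeas.1 (by simpa using hu)) humax
    calc wl v0 ≤ wl u := h3
      _ ≤ ∑ v ∈ F, wl v := Finset.single_le_sum (fun v _ => hwl v) hu

lemma exists_v0 {Vf : Set V} (wl wf : V → ℝ) (hVf : Vf.Nonempty) :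
    ∃ v, v ∈ Vf ∧ (∀ u ∈ Vf, wf u ≤ wf v) ∧
      (∀ u ∈ Vf, (∀ u' ∈ Vf, wf u' ≤ wf u) → wl v ≤ wl u) := by
  classical
  set T : Finset V := Finset.univ.filter (· ∈ Vf) with hT
  have hmemT : ∀ v, v ∈ T ↔ v ∈ Vf := fun v => by simp [hT]
  have hTne : T.Nonempty := by
    obtain ⟨v, hv⟩ := hVf
    exact ⟨v, (hmemT v).mpr hv⟩
  obtain ⟨b, hb, hbmax⟩ := T.exists_max_image wf hTne
  set T' : Finset V := T.filter (fun u => wf b ≤ wf u) with hT'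
  have hT'ne : T'.Nonempty := ⟨b, by simp [hT', hb]⟩
  obtain ⟨v0, hv0, hv0min⟩ := T'.exists_min_image wl hT'ne
  have hv0T' := hv0
  rw [hT', Finset.mem_filter] at hv0T'
  refine ⟨v0, (hmemT v0).mp hv0T'.1, ?_, ?_⟩
  · intro u hu
    exact le_trans (hbmax u ((hmemT u).mpr hu)) hv0T'.2
  · intro u hu humax
    refine hv0min u ?_
    rw [hT', Finset.mem_filter]
    exact ⟨(hmemT u).mpr hu, humax b ((hmemT b).mp hb)⟩

end Aux

/-- sum leader objective, bottleneck follower objective, pessimistic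
follower.  The leader's optimal value (the greatest, over feasible leader actions
`L`, of the least leader value over follower-optimal reactions) equals the maximum
of `M_ℓ` (best leader sum over nonempty independent `L ⊆ V_ℓ`) and `m_∅` (the
minimum `w_ℓ`-weight among the `w_f`-maximizers in `V_f`), expressed as the
supremum of the union of the corresponding (possibly empty) candidate sets. -/

theorem stmt_10 {V : Type*} [Fintype V] [DecidableEq V] [Nonempty V]
    (G : SimpleGraph V) (Vl Vf : Set V)
    (hpart : Vl ∪ Vf = Set.univ) (hdis : Disjoint Vl Vf)
    (wl wf : V → ℝ) (hwl : ∀ v, 0 ≤ wl v) (hwf : ∀ v, 0 ≤ wf v) :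
    IsGreatest
      {x : ℝ | ∃ L : Finset V, ↑L ⊆ Vl ∧ IndepSet G ↑L ∧
        (∃ F : Finset V, FReaction G Vf L F) ∧
        IsLeast {y : ℝ | ∃ F : Finset V, FOptReaction G Vf wf L F ∧
          y = ∑ v ∈ L ∪ F, wl v} x}
      (sSup
        ({x : ℝ | ∃ L : Finset V, ↑L ⊆ Vl ∧ L.Nonempty ∧ IndepSet G ↑L ∧
            x = ∑ v ∈ L, wl v} ∪
         {x : ℝ | ∃ v, v ∈ Vf ∧ (∀ u ∈ Vf, wf u ≤ wf v) ∧
            (∀ u ∈ Vf, (∀ u' ∈ Vf, wf u' ≤ wf u) → wl v ≤ wl u) ∧ x = wl v})) := by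
  classical
  set A : Set ℝ := {x : ℝ | ∃ L : Finset V, ↑L ⊆ Vl ∧ L.Nonempty ∧ IndepSet G ↑L ∧
      x = ∑ v ∈ L, wl v} with hA
  set B : Set ℝ := {x : ℝ | ∃ v, v ∈ Vf ∧ (∀ u ∈ Vf, wf u ≤ wf v) ∧
      (∀ u ∈ Vf, (∀ u' ∈ Vf, wf u' ≤ wf u) → wl v ≤ wl u) ∧ x = wl v} with hB
  set S : Set ℝ := {x : ℝ | ∃ L : Finset V, ↑L ⊆ Vl ∧ IndepSet G ↑L ∧
      (∃ F : Finset V, FReaction G Vf L F) ∧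
      IsLeast {y : ℝ | ∃ F : Finset V, FOptReaction G Vf wf L F ∧
        y = ∑ v ∈ L ∪ F, wl v} x} with hS
  have hSeq : S = A ∪ B := by
    apply Set.Subset.antisymm
    · rintro x ⟨L, hsub, hind, ⟨F, hF⟩, hleast⟩
      rcases L.eq_empty_or_nonempty with hLe | hLne
      · subst hLe
        have hFne : F.Nonempty := by simpa using hF.2.2
        obtain ⟨u, hu⟩ := hFne
        have huVf : u ∈ Vf := hF.1 (by simpa using hu)
        obtain ⟨v0, hv0, hmax, hmin⟩ := exists_v0 wl wf ⟨u, huVf⟩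
        have hx := (lemma_two G Vf wl wf hwl hv0 hmax hmin).unique hleast
        exact Or.inr ⟨v0, hv0, hmax, hmin, hx.symm⟩
      · have hx := (lemma_one G Vf wl wf hwl L hind hLne).unique hleast
        exact Or.inl ⟨L, hsub, hLne, hind, hx.symm⟩
    · rintro x (⟨L, hsub, hLne, hind, rfl⟩ | ⟨v0, hv0, hmax, hmin, rfl⟩)
      · exact ⟨L, hsub, hind,
          ⟨∅, by simp, by simpa using hind, by simpa using hLne⟩,
          lemma_one G Vf wl wf hwl L hind hLne⟩
      · refine ⟨∅, by simp, by simp [IndepSet], ⟨{v0}, ?_⟩,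
          lemma_two G Vf wl wf hwl hv0 hmax hmin⟩
        exact ⟨by simpa using hv0, by simp [IndepSet], by simp⟩
  have hfin : (A ∪ B).Finite := by
    apply Set.Finite.union
    · refine (Set.finite_range (fun L : Finset V => ∑ v ∈ L, wl v)).subset ?_
      rintro x ⟨L, _, _, _, rfl⟩
      exact ⟨L, rfl⟩
    · refine (Set.finite_range wl).subset ?_
      rintro x ⟨v, _, _, _, rfl⟩
      exact ⟨v, rfl⟩
  have hne : (A ∪ B).Nonempty := by
    rcases Set.eq_empty_or_nonempty Vl with hVl | ⟨v, hv⟩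
    · have hVfu : Vf.Nonempty := by
        rw [← Set.empty_union Vf, ← hVl, hpart]
        exact Set.univ_nonempty
      obtain ⟨v0, h1, h2, h3⟩ := exists_v0 wl wf hVfu
      exact ⟨wl v0, Or.inr ⟨v0, h1, h2, h3, rfl⟩⟩
    · exact ⟨wl v, Or.inl ⟨{v}, by simpa using hv, Finset.singleton_nonempty v,
        by simp [IndepSet], by simp⟩⟩
  rw [hSeq]
  exact ⟨hne.csSup_mem hfin, fun x hx => le_csSup hfin.bddAbove hx⟩
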